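/- arXiv:1812.09739 — 2 statements merged into one kernel-verified Lean document; each statement's English description precedes it below -/
import Mathlib

section
/- Let i ≥ 0 and let a ∈ A = 𝔽_q[θ] satisfy deg a ≤ i. Then for every 0 ≤ j ≤ i, the identity ∂_θ^j(a) = Σ_{ℓ=0}^{i} κ_{ijℓ}(t−θ, t^q−θ, …, t^{q^i}−θ) · a(t)^{q^ℓ} holds in the rational function field 𝔽_q(θ,t), where κ_{ijℓ}(x_0,…,x_i) = (−1)^{i−j} · e_{i,i−j}(x_0,…,x̂_ℓ,…,x_i) / Π_{m≠ℓ}(x_ℓ − x_m) (x̂_ℓ omitted), and a(t) ∈ 𝔽_q[t] denotes a with θ replaced by t. (The denominators Π_{m≠ℓ}(t^{q^ℓ} − t^{q^m}) are nonzero in 𝔽_q(θ,t).) -/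
open Polynomial Finset

noncomputable section

/-- Elementary symmetric polynomial of degree `j` in the family `v` indexed by the finite set `s`. -/
def esymF {R : Type*} [CommRing R] {α : Type*} [DecidableEq α] (s : Finset α) (v : α → R) (j : ℕ) : R :=
  ∑ S ∈ s.powersetCard j, ∏ m ∈ S, v m

variable (F : Type*) [Field F] [Fintype F]

local notation "q" => Fintype.card F

/-- The rational function field `𝔽_q(θ,t)`, realized as `RatFunc (RatFunc F)` with inner
variable `θ` and outer variable `t`. -/
local notation "Kθt" => RatFunc (RatFunc F)

/-- `t ∈ 𝔽_q(θ,t)`. -/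
def tK : RatFunc (RatFunc F) := RatFunc.X

/-- `θ ∈ 𝔽_q(θ,t)`. -/
def θK : RatFunc (RatFunc F) := RatFunc.C RatFunc.X

/-- The embedding `A = 𝔽_q[θ] → 𝔽_q(θ,t)`, `θ ↦ θ`. -/
def embA : Polynomial F →+* RatFunc (RatFunc F) :=
  (RatFunc.C : RatFunc F →+* RatFunc (RatFunc F)).comp (algebraMap (Polynomial F) (RatFunc F))

/-- `a(t) ∈ 𝔽_q(θ,t)`: the polynomial `a` with `θ` replaced by `t`. -/
def aT (a : Polynomial F) : RatFunc (RatFunc F) :=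
  Polynomial.eval₂
    ((RatFunc.C : RatFunc F →+* RatFunc (RatFunc F)).comp (RatFunc.C : F →+* RatFunc F))
    RatFunc.X a

lemma coeff_prod_X_sub_C' {K : Type*} [CommRing K] {ι : Type*} [DecidableEq ι]
    (s : Finset ι) (v : ι → K) {k : ℕ} (h : k ≤ s.card) :
    (∏ m ∈ s, (X - C (v m))).coeff k
      = (-1 : K) ^ (s.card - k) * ∑ S ∈ s.powersetCard (s.card - k), ∏ m ∈ S, v m := by
  have h2 : k ≤ Multiset.card (s.val.map v) := by simpa using h
  have := Multiset.prod_X_sub_C_coeff (s.val.map v) h2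
  rw [Multiset.map_map] at this
  simp only [Function.comp_def, Multiset.card_map] at this
  rw [Finset.prod, this, Finset.esymm_map_val]; rfl

lemma kron' {K : Type*} [Field K] (n : ℕ) (x : Fin (n + 1) → K) (hx : Function.Injective x)
    (j j' : ℕ) (hj : j ≤ n) (hj' : j' ≤ n) :
    ∑ ℓ : Fin (n + 1),
        ((-1 : K) ^ (n - j)
            * (∑ S ∈ ((univ : Finset (Fin (n+1))).erase ℓ).powersetCard (n - j), ∏ m ∈ S, x m)
            / ∏ m ∈ (univ : Finset (Fin (n+1))).erase ℓ, (x ℓ - x m)) * x ℓ ^ j'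
      = if j = j' then 1 else 0 := by
  have hdeg : (X ^ j' : K[X]).degree < (univ : Finset (Fin (n + 1))).card := by
    rw [degree_X_pow, card_univ, Fintype.card_fin]
    exact_mod_cast Nat.lt_succ_of_le hj'
  have h := Lagrange.eq_interpolate (f := (X ^ j' : K[X])) hx.injOn hdeg
  have hcoeff := congrArg (fun p => Polynomial.coeff p j) h
  simp only [coeff_X_pow, Lagrange.interpolate_apply, finset_sum_coeff, coeff_C_mul] at hcoeff
  have hbasis : ∀ ℓ : Fin (n + 1),
      (Lagrange.basis univ x ℓ).coeff j
        = (∏ m ∈ (univ : Finset (Fin (n+1))).erase ℓ, (x ℓ - x m))⁻¹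
            * ((-1 : K) ^ (n - j)
              * ∑ S ∈ ((univ : Finset (Fin (n+1))).erase ℓ).powersetCard (n - j), ∏ m ∈ S, x m) := by
    intro ℓ
    have hcard : ((univ : Finset (Fin (n+1))).erase ℓ).card = n := by
      rw [card_erase_of_mem (mem_univ ℓ)]; simp
    rw [Lagrange.basis]
    simp only [Lagrange.basisDivisor]
    rw [prod_mul_distrib, ← map_prod, coeff_C_mul,
      coeff_prod_X_sub_C' _ _ (le_of_le_of_eq hj hcard.symm), hcard, ← Finset.prod_inv_distrib]
  calc ∑ ℓ : Fin (n + 1),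
        ((-1 : K) ^ (n - j)
            * (∑ S ∈ ((univ : Finset (Fin (n+1))).erase ℓ).powersetCard (n - j), ∏ m ∈ S, x m)
            / ∏ m ∈ (univ : Finset (Fin (n+1))).erase ℓ, (x ℓ - x m)) * x ℓ ^ j'
      = ∑ ℓ : Fin (n + 1), eval (x ℓ) (X ^ j' : K[X]) * (Lagrange.basis univ x ℓ).coeff j := by
        refine Finset.sum_congr rfl fun ℓ _ => ?_
        rw [hbasis ℓ, eval_pow, eval_X, div_eq_mul_inv]
        ring
    _ = if j = j' then 1 else 0 := hcoeff.symm

lemma map_hasseDeriv' {R S : Type*} [CommRing R] [CommRing S] (c : R →+* S) (k : ℕ)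
    (a : R[X]) : (hasseDeriv k a).map c = hasseDeriv k (a.map c) := by
  ext n
  simp [hasseDeriv_coeff, coeff_map]

lemma eval₂_add_eq_sum' {R K : Type*} [CommRing R] [CommRing K] (c : R →+* K) (a : R[X])
    {n : ℕ} (ha : a.natDegree ≤ n) (u y : K) :
    eval₂ c (u + y) a = ∑ k ∈ range (n + 1), eval₂ c u (hasseDeriv k a) * y ^ k := by
  rw [eval₂_eq_eval_map, show u + y = y + u from add_comm u y, ← taylor_eval u (a.map c) y]
  rw [eval_eq_sum_range' (n := n + 1)
    (lt_of_le_of_lt (by rw [natDegree_taylor]; exact natDegree_map_le.trans ha)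
      (Nat.lt_succ_self n)) y]
  refine Finset.sum_congr rfl fun k _ => ?_
  rw [taylor_coeff, ← map_hasseDeriv', eval_map, eval₂_eq_eval_map]

lemma eval₂_pow_hom' {R K : Type*} [CommRing R] [CommRing K] (g : K →+* K) (c : R →+* K)
    (hgc : ∀ s, g (c s) = c s) (u : K) (a : R[X]) :
    g (eval₂ c u a) = eval₂ c (g u) a := by
  rw [hom_eval₂]
  congr 1
  ext s
  exact hgc s

/-- Let `i ≥ 0` and `a ∈ A = 𝔽_q[θ]` with `deg a ≤ i`.  For every `0 ≤ j ≤ i`,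
`∂_θ^j(a) = Σ_{ℓ=0}^{i} κ_{ijℓ}(t−θ, t^q−θ, …, t^{q^i}−θ) · a(t)^{q^ℓ}` in `𝔽_q(θ,t)`, where
`κ_{ijℓ}(x_0,…,x_i) = (−1)^{i−j} e_{i,i−j}(x_0,…,x̂_ℓ,…,x_i) / Π_{m≠ℓ}(x_ℓ − x_m)` (`x̂_ℓ`
omitted) and `∂_θ^j` is the `j`-th hyperderivative (Hasse derivative). -/
theorem stmt7 (i : ℕ) (a : Polynomial F) (ha : a.natDegree ≤ i) (j : ℕ) (hj : j ≤ i) :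
    embA F (hasseDeriv j a)
      = ∑ ℓ : Fin (i + 1),
          ((-1 : Kθt) ^ (i - j)
              * esymF ((univ : Finset (Fin (i + 1))).erase ℓ)
                  (fun n => tK F ^ q ^ (n : ℕ) - θK F) (i - j)
              / ∏ m ∈ (univ : Finset (Fin (i + 1))).erase ℓ,
                  ((tK F ^ q ^ (ℓ : ℕ) - θK F) - (tK F ^ q ^ (m : ℕ) - θK F)))
            * aT F a ^ q ^ (ℓ : ℕ) := by
  classical
  set c : F →+* Kθt :=
    (RatFunc.C : RatFunc F →+* RatFunc (RatFunc F)).comp (RatFunc.C : F →+* RatFunc F) with hc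
  -- characteristic
  obtain ⟨f, hp, hq⟩ := FiniteField.card F (ringChar F)
  haveI : Fact (ringChar F).Prime := ⟨hp⟩
  haveI : CharP Kθt (ringChar F) := charP_of_injective_ringHom c.injective _
  -- Frobenius
  have hfrob : ∀ (u : Kθt) (b : Polynomial F), (eval₂ c u b) ^ q = eval₂ c (u ^ q) b := by
    intro u b
    have := eval₂_pow_hom' (iterateFrobenius Kθt (ringChar F) f) c
      (fun s => by
        rw [iterateFrobenius_def, ← hq, ← map_pow, FiniteField.pow_card]) u b
    simpa [iterateFrobenius_def, ← hq] using this
  have hpow : ∀ (ℓ : ℕ) (u : Kθt) (b : Polynomial F),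
      (eval₂ c u b) ^ q ^ ℓ = eval₂ c (u ^ q ^ ℓ) b := by
    intro ℓ
    induction ℓ with
    | zero => intro u b; simp
    | succ ℓ ih =>
      intro u b
      rw [pow_succ, pow_mul, ih, hfrob, ← pow_mul, ← pow_succ]
  -- embA as eval₂ at θ
  have hemb : ∀ b : Polynomial F, embA F b = eval₂ c (θK F) b := by
    intro b
    have : embA F = eval₂RingHom c (θK F) := by
      apply Polynomial.ringHom_ext
      · intro s
        simp [embA, hc, θK, RatFunc.algebraMap_C]
      · simp [embA, hc, θK, RatFunc.algebraMap_X]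
    rw [this, coe_eval₂RingHom]
  -- injectivity of the nodes
  set x : Fin (i + 1) → Kθt := fun ℓ => tK F ^ q ^ (ℓ : ℕ) - θK F with hx
  have hxinj : Function.Injective x := by
    intro ℓ m hlm
    have h1 : tK F ^ q ^ (ℓ : ℕ) = tK F ^ q ^ (m : ℕ) := by
      simpa [hx, sub_left_inj] using hlm
    have h2 : (algebraMap (Polynomial (RatFunc F)) Kθt) (X ^ q ^ (ℓ : ℕ))
        = (algebraMap (Polynomial (RatFunc F)) Kθt) (X ^ q ^ (m : ℕ)) := by
      simpa [map_pow, RatFunc.algebraMap_X, tK] using h1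
    have h3 : (X : Polynomial (RatFunc F)) ^ q ^ (ℓ : ℕ) = X ^ q ^ (m : ℕ) :=
      RatFunc.algebraMap_injective _ h2
    have h4 : q ^ (ℓ : ℕ) = q ^ (m : ℕ) := by
      have := congrArg natDegree h3
      simpa [natDegree_X_pow] using this
    have h5 : (ℓ : ℕ) = (m : ℕ) :=
      Nat.pow_right_injective Fintype.one_lt_card h4
    exact Fin.ext h5
  -- expand each power of aT
  have haT : aT F a = eval₂ c (tK F) a := rfl
  have hterm : ∀ ℓ : Fin (i + 1),
      aT F a ^ q ^ (ℓ : ℕ)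
        = ∑ j' ∈ range (i + 1), embA F (hasseDeriv j' a) * x ℓ ^ j' := by
    intro ℓ
    have hsplit : tK F ^ q ^ (ℓ : ℕ) = θK F + x ℓ := by
      simp [hx]
    rw [haT, hpow, hsplit, eval₂_add_eq_sum' c a ha]
    exact Finset.sum_congr rfl fun k _ => by rw [hemb]
  -- rewrite the right-hand side
  calc embA F (hasseDeriv j a)
      = ∑ j' ∈ range (i + 1),
          embA F (hasseDeriv j' a) * (if j = j' then 1 else 0) := by
        symm
        simp only [mul_ite, mul_one, mul_zero]
        rw [Finset.sum_ite_eq, if_pos (mem_range.mpr (Nat.lt_succ_of_le hj))]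
    _ = ∑ j' ∈ range (i + 1), embA F (hasseDeriv j' a)
          * ∑ ℓ : Fin (i + 1),
            ((-1 : Kθt) ^ (i - j)
              * (∑ S ∈ ((univ : Finset (Fin (i+1))).erase ℓ).powersetCard (i - j), ∏ m ∈ S, x m)
              / ∏ m ∈ (univ : Finset (Fin (i+1))).erase ℓ, (x ℓ - x m)) * x ℓ ^ j' := by
        refine Finset.sum_congr rfl fun j' hj' => ?_
        rw [kron' i x hxinj j j' hj (Nat.lt_succ_iff.mp (mem_range.mp hj'))]
    _ = ∑ ℓ : Fin (i + 1),
          ((-1 : Kθt) ^ (i - j)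
              * (∑ S ∈ ((univ : Finset (Fin (i+1))).erase ℓ).powersetCard (i - j), ∏ m ∈ S, x m)
              / ∏ m ∈ (univ : Finset (Fin (i+1))).erase ℓ, (x ℓ - x m))
            * ∑ j' ∈ range (i + 1), embA F (hasseDeriv j' a) * x ℓ ^ j' := by
        simp only [Finset.mul_sum]
        rw [Finset.sum_comm]
        exact Finset.sum_congr rfl fun ℓ _ => Finset.sum_congr rfl fun j' _ => by ring
    _ = _ := by
        refine Finset.sum_congr rfl fun ℓ _ => ?_
        rw [← hterm ℓ]
        rfl


end
end

section
/- Let d ≥ 1 and let T, x_1,…,x_d be independent variables. Then for every k ≥ 0, the identity h_{d,k}(T−x_1, …, T−x_d) = Σ_{j=0}^{k} (−1)^{j} · binom(d+k−1, k−j) · h_{d,j}(x_1,…,x_d) · T^{k−j} holds in the polynomial ring ℤ[x_1,…,x_d,T]. -/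
open Polynomial Finset

noncomputable section

/-- Complete homogeneous symmetric polynomial of degree `j` in the family `v` indexed by the
finite set `s`: the sum of all monomials of total degree `j` in the values of `v`. -/
def hsymF {R : Type*} [CommRing R] {α : Type*} [DecidableEq α] (s : Finset α) (v : α → R) (j : ℕ) : R :=
  ∑ m ∈ s.sym j, ((m : Multiset α).map v).prod

lemma hsymF_zero {R : Type*} [CommRing R] {α : Type*} [DecidableEq α] (s : Finset α) (v : α → R) :
    hsymF s v 0 = 1 := by
  rw [hsymF]
  rw [Finset.sym_zero, Finset.sum_singleton]
  have : ((∅ : Sym α 0) : Multiset α) = 0 := rfl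
  rw [this]
  simp

lemma hsymF_singleton {R : Type*} [CommRing R] {α : Type*} [DecidableEq α] (a : α) (v : α → R)
    (n : ℕ) : hsymF {a} v n = v a ^ n := by
  simp [hsymF, Finset.sym_singleton, Sym.coe_replicate]

lemma hsymF_insert {R : Type*} [CommRing R] {α : Type*} [DecidableEq α] {a : α} {s : Finset α}
    (ha : a ∉ s) (v : α → R) (n : ℕ) :
    hsymF (insert a s) v (n + 1) = hsymF s v (n + 1) + v a * hsymF (insert a s) v n := by
  classical
  have hsplit : ((insert a s).sym (n + 1)).filter (fun m => a ∉ m) = s.sym (n + 1) := by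
    ext m
    simp only [Finset.mem_filter, Finset.mem_sym_iff, Finset.mem_insert]
    constructor
    · rintro ⟨h1, h2⟩ b hb
      rcases h1 b hb with rfl | h
      · exact absurd hb h2
      · exact h
    · intro h
      exact ⟨fun b hb => Or.inr (h b hb), fun hm => ha (h a hm)⟩
  have himg : ((insert a s).sym (n + 1)).filter (fun m => a ∈ m)
      = ((insert a s).sym n).image (fun m => a ::ₛ m) := by
    ext m
    simp only [Finset.mem_filter, Finset.mem_image, Finset.mem_sym_iff]
    constructor
    · rintro ⟨h1, h2⟩
      exact ⟨m.erase a h2, fun b hb => h1 b (by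
        have hb' : b ∈ (m.erase a h2 : Multiset α) := Sym.mem_coe.mpr hb
        rw [Sym.coe_erase] at hb'
        exact Sym.mem_coe.mp (Multiset.mem_of_mem_erase hb')), Sym.cons_erase h2⟩
    · rintro ⟨m', hm', rfl⟩
      refine ⟨fun b hb => ?_, Sym.mem_cons_self a m'⟩
      rcases Sym.mem_cons.mp hb with rfl | h
      · exact Finset.mem_insert_self _ _
      · exact hm' b h
  rw [hsymF, ← Finset.sum_filter_add_sum_filter_not ((insert a s).sym (n + 1)) (fun m => a ∈ m),
    hsplit, himg, Finset.sum_image (fun m _ m' _ h => (Sym.cons_inj_right a m m').mp h)]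
  rw [add_comm, hsymF, hsymF, Finset.mul_sum]
  congr 1
  refine Finset.sum_congr rfl fun m _ => ?_
  rw [Sym.coe_cons, Multiset.map_cons, Multiset.prod_cons]

lemma auxAlg {R : Type*} [CommRing R] (T xa : R) (Hd H' : ℕ → R) (h0 : H' 0 = Hd 0)
    (hrec : ∀ j, H' (j + 1) = Hd (j + 1) + xa * H' j) (n k : ℕ) :
    (∑ j ∈ range (k + 2), (-1 : R) ^ j * ((n + 1).choose (k + 1 - j) : R) * H' j * T ^ (k + 1 - j))
      = (∑ j ∈ range (k + 2), (-1 : R) ^ j * (n.choose (k + 1 - j) : R) * Hd j * T ^ (k + 1 - j))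
        + (T - xa) * ∑ j ∈ range (k + 1), (-1 : R) ^ j * (n.choose (k - j) : R) * H' j * T ^ (k - j) := by
  have stepA : (∑ j ∈ range (k + 2), (-1 : R) ^ j * ((n + 1).choose (k + 1 - j) : R) * H' j * T ^ (k + 1 - j))
      = (∑ j ∈ range (k + 2), (-1 : R) ^ j * (n.choose (k + 1 - j) : R) * H' j * T ^ (k + 1 - j))
        + ∑ j ∈ range (k + 1), T * ((-1 : R) ^ j * (n.choose (k - j) : R) * H' j * T ^ (k - j)) := by
    rw [Finset.sum_range_succ, Finset.sum_range_succ
      (f := fun j => (-1 : R) ^ j * (n.choose (k + 1 - j) : R) * H' j * T ^ (k + 1 - j))]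
    have hmid : ∀ j ∈ range (k + 1),
        (-1 : R) ^ j * ((n + 1).choose (k + 1 - j) : R) * H' j * T ^ (k + 1 - j)
          = (-1 : R) ^ j * (n.choose (k + 1 - j) : R) * H' j * T ^ (k + 1 - j)
            + T * ((-1 : R) ^ j * (n.choose (k - j) : R) * H' j * T ^ (k - j)) := by
      intro j hj
      rw [mem_range] at hj
      have h1 : k + 1 - j = (k - j) + 1 := by omega
      rw [h1, Nat.choose_succ_succ]
      push_cast
      ring
    rw [Finset.sum_congr rfl hmid, Finset.sum_add_distrib]
    have hlast : k + 1 - (k + 1) = 0 := by omega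
    rw [hlast]
    simp only [Nat.choose_zero_right, Nat.cast_one]
    ring
  have stepB : (∑ j ∈ range (k + 2), (-1 : R) ^ j * (n.choose (k + 1 - j) : R) * Hd j * T ^ (k + 1 - j))
      - (∑ j ∈ range (k + 2), (-1 : R) ^ j * (n.choose (k + 1 - j) : R) * H' j * T ^ (k + 1 - j))
      = xa * ∑ j ∈ range (k + 1), (-1 : R) ^ j * (n.choose (k - j) : R) * H' j * T ^ (k - j) := by
    rw [← Finset.sum_sub_distrib, Finset.sum_range_succ', Finset.mul_sum]
    have hz : (-1 : R) ^ 0 * (n.choose (k + 1 - 0) : R) * Hd 0 * T ^ (k + 1 - 0)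
        - (-1 : R) ^ 0 * (n.choose (k + 1 - 0) : R) * H' 0 * T ^ (k + 1 - 0) = 0 := by
      rw [h0]; ring
    rw [hz, add_zero]
    refine Finset.sum_congr rfl fun i hi => ?_
    rw [mem_range] at hi
    have h1 : k + 1 - (i + 1) = k - i := by omega
    rw [h1, hrec i]
    ring
  rw [stepA, ← Finset.mul_sum]
  linear_combination -stepB

lemma key {R : Type*} [CommRing R] (T : R) (x : ℕ → R) : ∀ e k : ℕ,
    hsymF (Icc 1 (e + 1)) (fun m => T - x m) k
      = ∑ j ∈ range (k + 1),
          (-1 : R) ^ j * ((e + k).choose (k - j) : R) * hsymF (Icc 1 (e + 1)) x j * T ^ (k - j) := by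
  intro e
  induction e with
  | zero =>
    intro k
    rw [Finset.Icc_self, hsymF_singleton, sub_pow]
    conv_rhs => rw [← Finset.sum_range_reflect]
    refine Finset.sum_congr rfl fun j hj => ?_
    rw [mem_range] at hj
    rw [hsymF_singleton]
    have h1 : k + 1 - 1 - j = k - j := by omega
    have h2 : k - (k - j) = j := by omega
    rw [h1, h2]
    have h3 : (-1 : R) ^ (j + k) = (-1 : R) ^ (k - j) := by
      rw [show j + k = (k - j) + 2 * j by omega, pow_add, pow_mul, neg_one_sq, one_pow, mul_one]
    rw [h3]
    push_cast
    ring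
  | succ e ihe =>
    intro k
    induction k with
    | zero => simp [hsymF_zero]
    | succ k ihk =>
      have hins : Icc 1 (e + 1 + 1) = insert (e + 1 + 1) (Icc 1 (e + 1)) := by
        ext m; simp; omega
      have hnot : (e + 1 + 1) ∉ Icc 1 (e + 1) := by simp
      have hrec : ∀ j, hsymF (Icc 1 (e + 1 + 1)) x (j + 1)
          = hsymF (Icc 1 (e + 1)) x (j + 1) + x (e + 1 + 1) * hsymF (Icc 1 (e + 1 + 1)) x j := by
        intro j
        rw [hins, hsymF_insert hnot]
      have h0 : hsymF (Icc 1 (e + 1 + 1)) x 0 = hsymF (Icc 1 (e + 1)) x 0 := by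
        rw [hsymF_zero, hsymF_zero]
      have hW : hsymF (Icc 1 (e + 1 + 1)) (fun m => T - x m) (k + 1)
          = hsymF (Icc 1 (e + 1)) (fun m => T - x m) (k + 1)
            + (T - x (e + 1 + 1)) * hsymF (Icc 1 (e + 1 + 1)) (fun m => T - x m) k := by
        rw [hins, hsymF_insert hnot]
      rw [hW, ihe (k + 1), ihk]
      have := auxAlg T (x (e + 1 + 1)) (fun j => hsymF (Icc 1 (e + 1)) x j)
        (fun j => hsymF (Icc 1 (e + 1 + 1)) x j) h0 hrec (e + k + 1) k
      rw [show e + 1 + k = e + k + 1 by omega, show e + 1 + (k + 1) = e + k + 1 + 1 by omega]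
      exact this.symm


/-- For `d ≥ 1` and `k ≥ 0`,
`h_{d,k}(T−x_1,…,T−x_d) = Σ_{j=0}^{k} (−1)^j · binom(d+k−1,k−j) · h_{d,j}(x_1,…,x_d) · T^{k−j}`.
(Stated for arbitrary elements `T, x_1,…,x_d` of an arbitrary commutative ring, which is
equivalent to the identity in `ℤ[x_1,…,x_d,T]`; `x n` denotes `x_n`.) -/
theorem stmt14 {R : Type*} [CommRing R] (d : ℕ) (hd : 1 ≤ d) (k : ℕ) (T : R) (x : ℕ → R) :
    hsymF (Icc 1 d) (fun m => T - x m) k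
      = ∑ j ∈ range (k + 1),
          (-1 : R) ^ j * ((d + k - 1).choose (k - j) : R) * hsymF (Icc 1 d) x j * T ^ (k - j) := by
  obtain ⟨e, rfl⟩ : ∃ e, d = e + 1 := ⟨d - 1, by omega⟩
  rw [show e + 1 + k - 1 = e + k by omega]
  exact key T x e k

end
end
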